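/- Let {Π_k}_{k=1}^{D_S} be a complete set of orthonormal Hermitian projections on ℂ^{D_S} ⊗ ℂ^{D_E} each of rank D_E, and U unitary with (1/D²)|Tr U|² > 1/D_S for D = D_S D_E. Then there exists k such that (1/D_E) Tr[U Π_k U† Π_k] > 1/D_S; i.e., not all coarse-grained states can be scrambled to the uniform value 1/D_S. -/

import Mathlib

open Matrix

/-- if the spectral form factor exceeds `1/D_S`, then some coarse-grained
state has return probability exceeding the thermal value `1/D_S`, so scrambling is
impossible at that time. -/
theorem stmt17 (DS DE D : ℕ) (hD : D = DS * DE) (hDSpos : 0 < DS) (hDEpos : 0 < DE)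
    (P : Fin DS → Matrix (Fin D) (Fin D) ℂ)
    (hherm : ∀ k, (P k)ᴴ = P k)
    (horth : ∀ k l, P k * P l = if k = l then P k else 0)
    (hcomp : ∑ k, P k = 1)
    (htrace : ∀ k, (P k).trace = (DE : ℂ))
    (U : Matrix (Fin D) (Fin D) ℂ) (hU : U ∈ Matrix.unitaryGroup (Fin D) ℂ)
    (hK : 1 / (DS : ℝ) < (1 / (D : ℝ) ^ 2) * ‖U.trace‖ ^ 2) :
    ∃ k, 1 / (DS : ℝ) < (1 / (DE : ℝ)) * ((U * P k * Uᴴ * P k).trace).re := by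
  by_contra hcon
  push_neg at hcon
  set a : Fin DS → ℂ := fun k => (U * P k).trace with ha
  set S : Matrix (Fin D) (Fin D) ℂ → ℝ :=
    fun M => ∑ p : Fin D × Fin D, ‖M p.2 p.1‖ ^ 2 with hS
  have htrconj : ∀ M : Matrix (Fin D) (Fin D) ℂ, (Mᴴ * M).trace = ((S M : ℝ) : ℂ) := by
    intro M
    rw [hS]
    push_cast
    rw [Fintype.sum_prod_type]
    simp only [Matrix.trace, Matrix.diag, Matrix.mul_apply, Matrix.conjTranspose_apply]
    congr 1; ext i; congr 1; ext j
    rw [Complex.star_def, Complex.conj_mul']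
  -- per-k key facts
  have key : ∀ k, ‖a k‖ ^ 2 ≤ (DE : ℝ) * ((U * P k * Uᴴ * P k).trace).re := by
    intro k
    set B := P k with hB
    have hB2 : B * B = B := by simpa using horth k k
    have hBH : Bᴴ = B := hherm k
    set A := B * U * B with hA
    have hAH : Aᴴ = B * Uᴴ * B := by
      rw [hA, Matrix.conjTranspose_mul, Matrix.conjTranspose_mul, hBH, ← mul_assoc]
    -- S B = DE
    have hSB : S B = (DE : ℝ) := by
      have h1 : (Bᴴ * B).trace = ((S B : ℝ) : ℂ) := htrconj B
      rw [hBH, hB2, htrace k] at h1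
      exact_mod_cast h1.symm
    -- trace(Aᴴ A) = trace(U B Uᴴ B)
    have hAA : ((U * B * Uᴴ * B).trace : ℂ) = ((S A : ℝ) : ℂ) := by
      rw [← htrconj A, hAH, hA]
      have e1 : B * Uᴴ * B * (B * U * B) = B * (Uᴴ * (B * (U * B))) := by
        calc B * Uᴴ * B * (B * U * B) = B * Uᴴ * (B * B) * (U * B) := by
              simp only [mul_assoc]
          _ = B * (Uᴴ * (B * (U * B))) := by rw [hB2]; simp only [mul_assoc]
      have e2 : Uᴴ * (B * (U * B)) * B = Uᴴ * B * (U * B) := by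
        calc Uᴴ * (B * (U * B)) * B = Uᴴ * B * U * (B * B) := by simp only [mul_assoc]
          _ = Uᴴ * B * (U * B) := by rw [hB2]; simp only [mul_assoc]
      calc (U * B * Uᴴ * B).trace
          = ((U * B) * (Uᴴ * B)).trace := by rw [mul_assoc (U * B) Uᴴ B]
        _ = ((Uᴴ * B) * (U * B)).trace := Matrix.trace_mul_comm _ _
        _ = ((Uᴴ * (B * (U * B))) * B).trace := by rw [e2]
        _ = (B * (Uᴴ * (B * (U * B)))).trace := (Matrix.trace_mul_comm _ _).symm
        _ = (B * Uᴴ * B * (B * U * B)).trace := by rw [e1]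
    have hre : ((U * B * Uᴴ * B).trace).re = S A := by
      rw [hAA]; exact Complex.ofReal_re _
    -- a k = trace (Bᴴ * A)
    have hak : a k = (Bᴴ * A).trace := by
      rw [ha]
      rw [hBH, hA]
      have e3 : B * (B * U * B) = B * U * B := by
        calc B * (B * U * B) = B * B * (U * B) := by simp only [mul_assoc]
          _ = B * U * B := by rw [hB2]; simp only [mul_assoc]
      rw [e3, Matrix.trace_mul_comm, ← mul_assoc, hB2]
      exact (Matrix.trace_mul_comm _ _)
    -- Cauchy-Schwarz
    have hak2 : a k = ∑ p : Fin D × Fin D,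
        (starRingEnd ℂ) (B p.2 p.1) * A p.2 p.1 := by
      rw [hak]
      rw [Fintype.sum_prod_type]
      simp only [Matrix.trace, Matrix.diag, Matrix.mul_apply, Matrix.conjTranspose_apply,
        Complex.star_def]
    have hnorm : ‖a k‖ ≤ ∑ p : Fin D × Fin D, ‖B p.2 p.1‖ * ‖A p.2 p.1‖ := by
      rw [hak2]
      refine (norm_sum_le _ _).trans ?_
      apply Finset.sum_le_sum
      intro p _
      rw [norm_mul, RingHomIsometric.norm_map]
    have hcs : (∑ p : Fin D × Fin D, ‖B p.2 p.1‖ * ‖A p.2 p.1‖) ^ 2 ≤ S B * S A :=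
      Finset.sum_mul_sq_le_sq_mul_sq _ _ _
    have h4 : ‖a k‖ ^ 2 ≤ S B * S A := by
      refine le_trans ?_ hcs
      have := pow_le_pow_left₀ (norm_nonneg (a k)) hnorm 2
      exact this
    rw [hre, ← hSB]
    exact h4
  -- sum identity
  have hsum : ∑ k, a k = U.trace := by
    rw [ha]
    rw [← Matrix.trace_sum, ← Finset.mul_sum, hcomp, mul_one]
  -- Cauchy-Schwarz over k
  have h5 : ‖U.trace‖ ^ 2 ≤ (DS : ℝ) * ∑ k, ‖a k‖ ^ 2 := by
    have h6 : ‖U.trace‖ ≤ ∑ k, ‖a k‖ := by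
      rw [← hsum]; exact norm_sum_le _ _
    have h7 : (∑ k, ‖a k‖) ^ 2 ≤ (DS : ℝ) * ∑ k, ‖a k‖ ^ 2 := by
      have := Finset.sum_mul_sq_le_sq_mul_sq Finset.univ (fun _ : Fin DS => (1 : ℝ))
        (fun k => ‖a k‖)
      simpa using this
    exact le_trans (pow_le_pow_left₀ (norm_nonneg _) h6 2) h7
  -- bound from hcon
  have h8 : ∑ k, ‖a k‖ ^ 2 ≤ (DE : ℝ) * (DE : ℝ) := by
    have hb : ∀ k, ‖a k‖ ^ 2 ≤ (DE : ℝ) ^ 2 * (1 / (DS : ℝ)) := by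
      intro k
      refine (key k).trans ?_
      set r := ((U * P k * Uᴴ * P k).trace).re with hr
      have hk := hcon k
      have h2 := mul_le_mul_of_nonneg_left hk
        (le_of_lt (by positivity : (0:ℝ) < (DE : ℝ) ^ 2))
      have h3 : (DE : ℝ) ^ 2 * (1 / (DE : ℝ) * r) = (DE : ℝ) * r := by
        field_simp
      rw [← h3]
      exact h2
    calc ∑ k, ‖a k‖ ^ 2 ≤ ∑ _k : Fin DS, (DE : ℝ) ^ 2 * (1 / (DS : ℝ)) :=
          Finset.sum_le_sum (fun k _ => hb k)
      _ = (DS : ℝ) * ((DE : ℝ) ^ 2 * (1 / (DS : ℝ))) := by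
          rw [Finset.sum_const]; simp [mul_comm]
      _ = (DE : ℝ) * (DE : ℝ) := by field_simp
  have hDr : (D : ℝ) = (DS : ℝ) * (DE : ℝ) := by exact_mod_cast congrArg Nat.cast hD
  have hfin : (1 / (D : ℝ) ^ 2) * ‖U.trace‖ ^ 2 ≤ 1 / (DS : ℝ) := by
    have h9 : ‖U.trace‖ ^ 2 ≤ (DS : ℝ) * ((DE : ℝ) * (DE : ℝ)) := by
      refine h5.trans ?_
      exact mul_le_mul_of_nonneg_left h8 (by positivity)
    rw [hDr]
    rw [div_mul_eq_mul_div, one_mul, div_le_div_iff₀ (by positivity) (by positivity)]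
    nlinarith [h9]
  linarith
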